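/- (Lemma 1) Let L be a positive integer. Let (a_l)_{l=1}^L, (â_l)_{l=1}^L, (b_l)_{l=1}^L be mutually independent random variables, each with Rayleigh density f(r) = 2r e^{−r²} (r ≥ 0), and let (Z_l)_{l=1}^L be independent of them and of each other, each with triangular density f_Z(z) = (2π − |z|)/(4π²) on [−2π, 2π]. Define the complex random variable R = Σ_{l=1}^L b_l (a_l − â_l e^{iZ_l}). Then μ_R := E[R] = Lπ/4 and σ_R² := E[|R − E[R]|²] = L(32 − π²)/16. -/

import Mathlib

open MeasureTheory ProbabilityTheory Real
open Set
open scoped ENNReal NNReal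

/-- The Rayleigh density f(r) = 2r e^{-r²} for r ≥ 0, 0 otherwise. -/
noncomputable def rayleighPdf (r : ℝ) : ℝ := if 0 ≤ r then 2 * r * Real.exp (-r^2) else 0

/-- The triangular density f_Z(z) = (2π - |z|)/(4π²) for |z| ≤ 2π, 0 otherwise. -/
noncomputable def triangularPdf (z : ℝ) : ℝ := if |z| ≤ 2*π then (2*π - |z|)/(4*π^2) else 0

section RealLine

lemma rayleighPdf_nonneg (r : ℝ) : 0 ≤ rayleighPdf r := by
  unfold rayleighPdf; split
  · positivity
  · exact le_refl 0

lemma rayleighPdf_meas : Measurable rayleighPdf := by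
  unfold rayleighPdf
  exact Measurable.ite (measurableSet_le measurable_const measurable_id) (by fun_prop)
    measurable_const

lemma triangularPdf_nonneg (z : ℝ) : 0 ≤ triangularPdf z := by
  unfold triangularPdf; split
  · have hπ : 0 < π := Real.pi_pos
    have h : (0:ℝ) ≤ 2*π - |z| := by linarith
    positivity
  · exact le_refl 0

lemma triangularPdf_meas : Measurable triangularPdf := by
  unfold triangularPdf
  exact Measurable.ite (measurableSet_le (by fun_prop) measurable_const) (by fun_prop)
    measurable_const

noncomputable def rayM : Measure ℝ := volume.withDensity fun r => ENNReal.ofReal (rayleighPdf r)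
noncomputable def triM : Measure ℝ := volume.withDensity fun z => ENNReal.ofReal (triangularPdf z)

lemma integral_rayM (g : ℝ → ℝ) : ∫ x, g x ∂rayM = ∫ x, rayleighPdf x * g x := by
  rw [rayM]
  have h : (fun r => ENNReal.ofReal (rayleighPdf r))
      = fun r => (((rayleighPdf r).toNNReal : ℝ≥0) : ℝ≥0∞) := rfl
  rw [h, integral_withDensity_eq_integral_smul (rayleighPdf_meas.real_toNNReal) g]
  congr 1; funext x
  simp [NNReal.smul_def, Real.coe_toNNReal _ (rayleighPdf_nonneg x)]

lemma integral_triM (g : ℝ → ℝ) : ∫ x, g x ∂triM = ∫ x, triangularPdf x * g x := by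
  rw [triM]
  have h : (fun r => ENNReal.ofReal (triangularPdf r))
      = fun r => (((triangularPdf r).toNNReal : ℝ≥0) : ℝ≥0∞) := rfl
  rw [h, integral_withDensity_eq_integral_smul (triangularPdf_meas.real_toNNReal) g]
  congr 1; funext x
  simp [NNReal.smul_def, Real.coe_toNNReal _ (triangularPdf_nonneg x)]

lemma ray_mul (g : ℝ → ℝ) : (fun x => rayleighPdf x * g x)
    = Set.indicator (Ici 0) (fun x => 2*x*Real.exp (-x^2) * g x) := by
  funext x
  simp only [rayleighPdf, Set.indicator_apply, mem_Ici]
  split_ifs <;> simp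

lemma integral_ray_mul (g : ℝ → ℝ) :
    ∫ x, rayleighPdf x * g x = ∫ x in Ioi 0, 2*x*Real.exp (-x^2) * g x := by
  rw [ray_mul, integral_indicator measurableSet_Ici, integral_Ici_eq_integral_Ioi]

lemma sq_moment : ∫ x in Ioi (0:ℝ), x^2 * Real.exp (-x^2) = Real.sqrt π / 4 := by
  have h := integral_rpow_mul_exp_neg_rpow (p := 2) (q := 2) (by norm_num) (by norm_num)
  have e : ∀ x ∈ Ioi (0:ℝ), x ^ (2:ℝ) * Real.exp (-x^(2:ℝ)) = x^2 * Real.exp (-x^2) := by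
    intro x hx; norm_num [Real.rpow_natCast]
  rw [setIntegral_congr_fun measurableSet_Ioi e] at h
  rw [h]
  have h32 : Real.Gamma ((2+1)/2) = Real.sqrt π / 2 := by
    have : ((2:ℝ)+1)/2 = 1/2 + 1 := by norm_num
    rw [this, Real.Gamma_add_one (by norm_num), Real.Gamma_one_half_eq]
    ring
  rw [h32]; ring

lemma cube_moment : ∫ x in Ioi (0:ℝ), x^3 * Real.exp (-x^2) = 1/2 := by
  have h := integral_rpow_mul_exp_neg_rpow (p := 2) (q := 3) (by norm_num) (by norm_num)
  have e : ∀ x ∈ Ioi (0:ℝ), x ^ (3:ℝ) * Real.exp (-x^(2:ℝ)) = x^3 * Real.exp (-x^2) := by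
    intro x hx
    rw [show (3:ℝ)=((3:ℕ):ℝ) by norm_num, Real.rpow_natCast,
      show (2:ℝ)=((2:ℕ):ℝ) by norm_num, Real.rpow_natCast]
  rw [setIntegral_congr_fun measurableSet_Ioi e] at h
  rw [h]
  have : ((3:ℝ)+1)/2 = 2 := by norm_num
  rw [this, Real.Gamma_two]; ring

lemma ray_moment1 : ∫ x, rayleighPdf x * x = Real.sqrt π / 2 := by
  rw [integral_ray_mul]
  have e : ∀ x ∈ Ioi (0:ℝ), 2*x*Real.exp (-x^2) * x = 2*(x^2 * Real.exp (-x^2)) := by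
    intro x _; ring
  rw [setIntegral_congr_fun measurableSet_Ioi e, integral_const_mul, sq_moment]
  ring

lemma ray_moment2 : ∫ x, rayleighPdf x * x^2 = 1 := by
  rw [integral_ray_mul]
  have e : ∀ x ∈ Ioi (0:ℝ), 2*x*Real.exp (-x^2) * x^2 = 2*(x^3 * Real.exp (-x^2)) := by
    intro x _; ring
  rw [setIntegral_congr_fun measurableSet_Ioi e, integral_const_mul, cube_moment]
  ring

lemma int_ray_id : Integrable (fun x : ℝ => rayleighPdf x * x) := by
  have h2 : Integrable (fun x : ℝ => 2*(x^2 * Real.exp (-x^2))) := by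
    have := (integrable_rpow_mul_exp_neg_mul_sq (b := 1) one_pos (s := 2) (by norm_num)).const_mul 2
    refine this.congr ?_
    filter_upwards with x
    norm_num [Real.rpow_natCast]
  refine h2.mono' (rayleighPdf_meas.mul measurable_id).aestronglyMeasurable ?_
  filter_upwards with x
  simp only [rayleighPdf]
  split_ifs with h
  · rw [Real.norm_eq_abs, abs_of_nonneg (by positivity)]
    nlinarith [Real.exp_pos (-x^2), sq_nonneg x]
  · simp only [zero_mul, norm_zero]; positivity

lemma int_ray_sq : Integrable (fun x : ℝ => rayleighPdf x * x^2) := by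
  have h3 : Integrable (fun x : ℝ => 2*(|x|^3 * Real.exp (-x^2))) := by
    have h := (integrable_rpow_mul_exp_neg_mul_sq (b := 1) one_pos (s := 3) (by norm_num)).abs
    refine (h.const_mul 2).congr ?_
    filter_upwards with x
    rw [show (3:ℝ)=((3:ℕ):ℝ) by norm_num, Real.rpow_natCast]
    rw [abs_mul, abs_of_pos (Real.exp_pos _), abs_pow, neg_one_mul]
  refine h3.mono' (rayleighPdf_meas.mul (measurable_id.pow_const 2)).aestronglyMeasurable ?_
  filter_upwards with x
  simp only [rayleighPdf]
  split_ifs with h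
  · rw [Real.norm_eq_abs, abs_of_nonneg (by positivity), abs_of_nonneg h]
    nlinarith [Real.exp_pos (-x^2), pow_nonneg h 3]
  · simp only [zero_mul, norm_zero]; positivity

lemma integral_tri_mul (g : ℝ → ℝ) :
    ∫ x, triangularPdf x * g x
      = ∫ z in (-(2*π))..(2*π), (2*π - |z|)/(4*π^2) * g z := by
  have hle : -(2*π) ≤ 2*π := by have := Real.pi_pos; linarith
  have h : (fun z => triangularPdf z * g z)
      = Set.indicator (Icc (-(2*π)) (2*π)) (fun z => (2*π - |z|)/(4*π^2) * g z) := by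
    funext z
    simp only [triangularPdf, Set.indicator_apply, mem_Icc, ← abs_le]
    split_ifs <;> simp
  rw [h, integral_indicator measurableSet_Icc, integral_Icc_eq_integral_Ioc,
    ← intervalIntegral.integral_of_le hle]

lemma K_cos : ∫ z in (-(2*π))..(2*π), (2*π - |z|) * Real.cos z = 0 := by
  have hc : ∀ a b : ℝ, IntervalIntegrable (fun z => (2*π - |z|) * Real.cos z) volume a b :=
    fun a b => ((continuous_const.sub continuous_abs).mul Real.continuous_cos).intervalIntegrable a b
  rw [← intervalIntegral.integral_add_adjacent_intervals (b := 0) (hc _ _) (hc _ _)]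
  have h1 : ∫ z in (-(2*π))..(0:ℝ), (2*π - |z|) * Real.cos z = 0 := by
    have hle : -(2*π) ≤ (0:ℝ) := by have := Real.pi_pos; linarith
    have he : EqOn (fun z => (2*π - |z|) * Real.cos z) (fun z => (2*π + z) * Real.cos z)
        (Set.uIcc (-(2*π)) 0) := by
      intro z hz
      rw [Set.uIcc_of_le hle] at hz
      have : |z| = -z := abs_of_nonpos hz.2
      simp only [this]; ring_nf
    rw [intervalIntegral.integral_congr he]
    have hderiv : ∀ z ∈ Set.uIcc (-(2*π)) (0:ℝ),
        HasDerivAt (fun z => (2*π + z) * Real.sin z + Real.cos z) ((2*π + z) * Real.cos z) z := by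
      intro z _
      have h1 : HasDerivAt (fun z : ℝ => 2*π + z) 1 z := (hasDerivAt_id z).const_add _
      have := (h1.mul (Real.hasDerivAt_sin z)).add (Real.hasDerivAt_cos z)
      exact this.congr_deriv (by ring)
    rw [intervalIntegral.integral_eq_sub_of_hasDerivAt hderiv
      (((continuous_const.add continuous_id).mul Real.continuous_cos).intervalIntegrable _ _)]
    simp
  have h2 : ∫ z in (0:ℝ)..(2*π), (2*π - |z|) * Real.cos z = 0 := by
    have hle : (0:ℝ) ≤ 2*π := by have := Real.pi_pos; linarith
    have he : EqOn (fun z => (2*π - |z|) * Real.cos z) (fun z => (2*π - z) * Real.cos z)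
        (Set.uIcc 0 (2*π)) := by
      intro z hz
      rw [Set.uIcc_of_le hle] at hz
      simp only [abs_of_nonneg hz.1]
    rw [intervalIntegral.integral_congr he]
    have hderiv : ∀ z ∈ Set.uIcc (0:ℝ) (2*π),
        HasDerivAt (fun z => (2*π - z) * Real.sin z - Real.cos z) ((2*π - z) * Real.cos z) z := by
      intro z _
      have h1 : HasDerivAt (fun z : ℝ => 2*π - z) (-1) z := by
        simpa using (hasDerivAt_id z).const_sub (2*π)
      have := (h1.mul (Real.hasDerivAt_sin z)).sub (Real.hasDerivAt_cos z)
      exact this.congr_deriv (by ring)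
    rw [intervalIntegral.integral_eq_sub_of_hasDerivAt hderiv
      (((continuous_const.sub continuous_id).mul Real.continuous_cos).intervalIntegrable _ _)]
    simp
  rw [h1, h2]; ring

lemma K_sin : ∫ z in (-(2*π))..(2*π), (2*π - |z|) * Real.sin z = 0 := by
  have hc : ∀ a b : ℝ, IntervalIntegrable (fun z => (2*π - |z|) * Real.sin z) volume a b :=
    fun a b => ((continuous_const.sub continuous_abs).mul Real.continuous_sin).intervalIntegrable a b
  rw [← intervalIntegral.integral_add_adjacent_intervals (b := 0) (hc _ _) (hc _ _)]
  have h1 : ∫ z in (-(2*π))..(0:ℝ), (2*π - |z|) * Real.sin z = -(2*π) := by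
    have hle : -(2*π) ≤ (0:ℝ) := by have := Real.pi_pos; linarith
    have he : EqOn (fun z => (2*π - |z|) * Real.sin z) (fun z => (2*π + z) * Real.sin z)
        (Set.uIcc (-(2*π)) 0) := by
      intro z hz
      rw [Set.uIcc_of_le hle] at hz
      have h : |z| = -z := abs_of_nonpos hz.2
      simp only [h]; ring_nf
    rw [intervalIntegral.integral_congr he]
    have hderiv : ∀ z ∈ Set.uIcc (-(2*π)) (0:ℝ),
        HasDerivAt (fun z => -((2*π + z) * Real.cos z) + Real.sin z) ((2*π + z) * Real.sin z) z := by
      intro z _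
      have h1 : HasDerivAt (fun z : ℝ => 2*π + z) 1 z := (hasDerivAt_id z).const_add _
      have := ((h1.mul (Real.hasDerivAt_cos z)).neg).add (Real.hasDerivAt_sin z)
      exact this.congr_deriv (by ring)
    rw [intervalIntegral.integral_eq_sub_of_hasDerivAt hderiv
      (((continuous_const.add continuous_id).mul Real.continuous_sin).intervalIntegrable _ _)]
    simp [Real.cos_neg, Real.sin_neg]
  have h2 : ∫ z in (0:ℝ)..(2*π), (2*π - |z|) * Real.sin z = 2*π := by
    have hle : (0:ℝ) ≤ 2*π := by have := Real.pi_pos; linarith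
    have he : EqOn (fun z => (2*π - |z|) * Real.sin z) (fun z => (2*π - z) * Real.sin z)
        (Set.uIcc 0 (2*π)) := by
      intro z hz
      rw [Set.uIcc_of_le hle] at hz
      simp only [abs_of_nonneg hz.1]
    rw [intervalIntegral.integral_congr he]
    have hderiv : ∀ z ∈ Set.uIcc (0:ℝ) (2*π),
        HasDerivAt (fun z => -((2*π - z) * Real.cos z) - Real.sin z) ((2*π - z) * Real.sin z) z := by
      intro z _
      have h1 : HasDerivAt (fun z : ℝ => 2*π - z) (-1) z := by
        simpa using (hasDerivAt_id z).const_sub (2*π)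
      have := ((h1.mul (Real.hasDerivAt_cos z)).neg).sub (Real.hasDerivAt_sin z)
      exact this.congr_deriv (by ring)
    rw [intervalIntegral.integral_eq_sub_of_hasDerivAt hderiv
      (((continuous_const.sub continuous_id).mul Real.continuous_sin).intervalIntegrable _ _)]
    simp
  rw [h1, h2]; ring

lemma tri_cos : ∫ x, triangularPdf x * Real.cos x = 0 := by
  rw [integral_tri_mul]
  have he : EqOn (fun z => (2*π - |z|)/(4*π^2) * Real.cos z)
      (fun z => (4*π^2)⁻¹ * ((2*π - |z|) * Real.cos z)) (Set.uIcc (-(2*π)) (2*π)) := by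
    intro z _; dsimp only; ring
  rw [intervalIntegral.integral_congr he, intervalIntegral.integral_const_mul, K_cos]
  ring

lemma tri_sin : ∫ x, triangularPdf x * Real.sin x = 0 := by
  rw [integral_tri_mul]
  have he : EqOn (fun z => (2*π - |z|)/(4*π^2) * Real.sin z)
      (fun z => (4*π^2)⁻¹ * ((2*π - |z|) * Real.sin z)) (Set.uIcc (-(2*π)) (2*π)) := by
    intro z _; dsimp only; ring
  rw [intervalIntegral.integral_congr he, intervalIntegral.integral_const_mul, K_sin]
  ring

end RealLine

section OmegaSide

variable {Ω : Type*} {mΩ : MeasurableSpace Ω} {μ : Measure Ω}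

lemma indep_comp_of_disjoint {ι : Type*}
    {f : ι → Ω → ℝ} (hindep : iIndepFun f μ)
    (hmeas : ∀ i, Measurable (f i))
    (S T : Finset ι) (hST : Disjoint S T)
    {φ : (S → ℝ) → ℝ} {ψ : (T → ℝ) → ℝ} (hφ : Measurable φ) (hψ : Measurable ψ) :
    IndepFun (fun ω => φ fun i => f i ω) (fun ω => ψ fun i => f i ω) μ :=
  (hindep.indepFun_finset S T hST hmeas).comp hφ hψ

lemma comp_integral_law {X : Ω → ℝ} {ν : Measure ℝ} (hX : Measurable X)
    (hlaw : Measure.map X μ = ν) {g : ℝ → ℝ} (hg : Measurable g) :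
    ∫ ω, g (X ω) ∂μ = ∫ x, g x ∂ν := by
  rw [← hlaw, integral_map hX.aemeasurable hg.aestronglyMeasurable]

lemma comp_integrable_ray {X : Ω → ℝ} (hX : Measurable X) (hlaw : Measure.map X μ = rayM)
    {g : ℝ → ℝ} (hg : Measurable g) (h : Integrable fun x => rayleighPdf x * g x) :
    Integrable (fun ω => g (X ω)) μ := by
  have h1 : Integrable g rayM := by
    rw [rayM, integrable_withDensity_iff rayleighPdf_meas.ennreal_ofReal
      (Filter.Eventually.of_forall fun x => ENNReal.ofReal_lt_top)]
    refine h.congr ?_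
    filter_upwards with x
    rw [ENNReal.toReal_ofReal (rayleighPdf_nonneg x)]; ring
  rw [← hlaw] at h1
  exact (integrable_map_measure hg.aestronglyMeasurable hX.aemeasurable).1 h1

noncomputable def uF (B A Ah Z : Ω → ℝ) : Ω → ℝ := fun ω => B ω * (A ω - Ah ω * Real.cos (Z ω))
noncomputable def vF (B Ah Z : Ω → ℝ) : Ω → ℝ := fun ω => -(B ω * (Ah ω * Real.sin (Z ω)))

lemma perCoord [IsProbabilityMeasure μ]
    {A Ah B Z : Ω → ℝ}
    (hA : Measurable A) (hAh : Measurable Ah) (hB : Measurable B) (hZ : Measurable Z)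
    (lawA : Measure.map A μ = rayM) (lawAh : Measure.map Ah μ = rayM)
    (lawB : Measure.map B μ = rayM) (lawZ : Measure.map Z μ = triM)
    (i1 : IndepFun Ah Z μ) (i2 : IndepFun A Ah μ)
    (i3 : IndepFun A (fun ω => Ah ω * Real.cos (Z ω)) μ)
    (i4 : IndepFun B (fun ω => A ω - Ah ω * Real.cos (Z ω)) μ)
    (i5 : IndepFun B (fun ω => Ah ω * Real.sin (Z ω)) μ)
    (i6 : IndepFun (fun ω => B ω^2) (fun ω => (A ω - Ah ω * Real.cos (Z ω))^2) μ)
    (i7 : IndepFun (fun ω => B ω^2) (fun ω => (Ah ω * Real.sin (Z ω))^2) μ) :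
    Integrable (uF B A Ah Z) μ ∧ Integrable (vF B Ah Z) μ ∧
    MemLp (uF B A Ah Z) 2 μ ∧ MemLp (vF B Ah Z) 2 μ ∧
    (∫ ω, uF B A Ah Z ω ∂μ) = π/4 ∧ (∫ ω, vF B Ah Z ω ∂μ) = 0 ∧
    variance (uF B A Ah Z) μ + variance (vF B Ah Z) μ = 2 - π^2/16 := by
  -- first moments
  have mA : ∫ ω, A ω ∂μ = Real.sqrt π / 2 := by
    have := comp_integral_law (μ := μ) hA lawA measurable_id
    simpa [integral_rayM, ray_moment1] using this
  have mAh : ∫ ω, Ah ω ∂μ = Real.sqrt π / 2 := by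
    have := comp_integral_law (μ := μ) hAh lawAh measurable_id
    simpa [integral_rayM, ray_moment1] using this
  have mB : ∫ ω, B ω ∂μ = Real.sqrt π / 2 := by
    have := comp_integral_law (μ := μ) hB lawB measurable_id
    simpa [integral_rayM, ray_moment1] using this
  have mA2 : ∫ ω, (A ω)^2 ∂μ = 1 := by
    have := comp_integral_law (μ := μ) hA lawA (measurable_id.pow_const 2)
    simpa [integral_rayM, ray_moment2] using this
  have mAh2 : ∫ ω, (Ah ω)^2 ∂μ = 1 := by
    have := comp_integral_law (μ := μ) hAh lawAh (measurable_id.pow_const 2)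
    simpa [integral_rayM, ray_moment2] using this
  have mB2 : ∫ ω, (B ω)^2 ∂μ = 1 := by
    have := comp_integral_law (μ := μ) hB lawB (measurable_id.pow_const 2)
    simpa [integral_rayM, ray_moment2] using this
  have mcos : ∫ ω, Real.cos (Z ω) ∂μ = 0 := by
    have := comp_integral_law (μ := μ) hZ lawZ Real.measurable_cos
    simpa [integral_triM, tri_cos] using this
  have msin : ∫ ω, Real.sin (Z ω) ∂μ = 0 := by
    have := comp_integral_law (μ := μ) hZ lawZ Real.measurable_sin
    simpa [integral_triM, tri_sin] using this
  -- integrability of basics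
  have iA : Integrable A μ := by
    simpa using comp_integrable_ray hA lawA measurable_id int_ray_id
  have iAh : Integrable Ah μ := by
    simpa using comp_integrable_ray hAh lawAh measurable_id int_ray_id
  have iB : Integrable B μ := by
    simpa using comp_integrable_ray hB lawB measurable_id int_ray_id
  have iA2 : Integrable (fun ω => (A ω)^2) μ :=
    comp_integrable_ray hA lawA (measurable_id.pow_const 2) int_ray_sq
  have iAh2 : Integrable (fun ω => (Ah ω)^2) μ :=
    comp_integrable_ray hAh lawAh (measurable_id.pow_const 2) int_ray_sq
  have iB2 : Integrable (fun ω => (B ω)^2) μ :=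
    comp_integrable_ray hB lawB (measurable_id.pow_const 2) int_ray_sq
  have icos : Integrable (fun ω => Real.cos (Z ω)) μ := by
    refine (integrable_const (1:ℝ)).mono'
      ((Real.measurable_cos.comp hZ).aestronglyMeasurable) ?_
    filter_upwards with ω
    simpa using Real.abs_cos_le_one (Z ω)
  have isin : Integrable (fun ω => Real.sin (Z ω)) μ := by
    refine (integrable_const (1:ℝ)).mono'
      ((Real.measurable_sin.comp hZ).aestronglyMeasurable) ?_
    filter_upwards with ω
    simpa using Real.abs_sin_le_one (Z ω)
  -- products with cos/sin
  have iAhcos : Integrable (fun ω => Ah ω * Real.cos (Z ω)) μ := by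
    refine iAh.abs.mono' ((hAh.mul (Real.measurable_cos.comp hZ)).aestronglyMeasurable) ?_
    filter_upwards with ω
    rw [Real.norm_eq_abs, abs_mul]
    calc |Ah ω| * |Real.cos (Z ω)| ≤ |Ah ω| * 1 :=
          mul_le_mul_of_nonneg_left (Real.abs_cos_le_one _) (abs_nonneg _)
      _ = |Ah ω| := mul_one _
  have iAhsin : Integrable (fun ω => Ah ω * Real.sin (Z ω)) μ := by
    refine iAh.abs.mono' ((hAh.mul (Real.measurable_sin.comp hZ)).aestronglyMeasurable) ?_
    filter_upwards with ω
    rw [Real.norm_eq_abs, abs_mul]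
    calc |Ah ω| * |Real.sin (Z ω)| ≤ |Ah ω| * 1 :=
          mul_le_mul_of_nonneg_left (Real.abs_sin_le_one _) (abs_nonneg _)
      _ = |Ah ω| := mul_one _
  have mAhcos : ∫ ω, Ah ω * Real.cos (Z ω) ∂μ = 0 := by
    have hi : IndepFun Ah (fun ω => Real.cos (Z ω)) μ :=
      i1.comp measurable_id Real.measurable_cos
    have := hi.integral_mul_eq_mul_integral iAh.aestronglyMeasurable icos.aestronglyMeasurable
    simp only [Pi.mul_apply] at this
    rw [show (fun ω => Ah ω * Real.cos (Z ω)) = Ah * (fun ω => Real.cos (Z ω)) from rfl]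
    exact this.trans (by rw [mcos, mul_zero])
  have mAhsin : ∫ ω, Ah ω * Real.sin (Z ω) ∂μ = 0 := by
    have hi : IndepFun Ah (fun ω => Real.sin (Z ω)) μ :=
      i1.comp measurable_id Real.measurable_sin
    have := hi.integral_mul_eq_mul_integral iAh.aestronglyMeasurable isin.aestronglyMeasurable
    simp only [Pi.mul_apply] at this
    rw [show (fun ω => Ah ω * Real.sin (Z ω)) = Ah * (fun ω => Real.sin (Z ω)) from rfl]
    exact this.trans (by rw [msin, mul_zero])
  -- W := A - Ah cos Z
  have iW : Integrable (fun ω => A ω - Ah ω * Real.cos (Z ω)) μ := iA.sub iAhcos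
  have mW : ∫ ω, (A ω - Ah ω * Real.cos (Z ω)) ∂μ = Real.sqrt π / 2 := by
    rw [integral_sub iA iAhcos, mA, mAhcos, sub_zero]
  have hsq : Real.sqrt π * Real.sqrt π = π := Real.mul_self_sqrt Real.pi_pos.le
  -- u and v : integrability and means
  have iu : Integrable (uF B A Ah Z) μ := by
    rw [show uF B A Ah Z = B * (fun ω => A ω - Ah ω * Real.cos (Z ω)) from rfl]
    exact i4.integrable_mul iB iW
  have mu : ∫ ω, uF B A Ah Z ω ∂μ = π/4 := by
    rw [show uF B A Ah Z = B * (fun ω => A ω - Ah ω * Real.cos (Z ω)) from rfl]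
    rw [i4.integral_mul_eq_mul_integral iB.aestronglyMeasurable iW.aestronglyMeasurable, mB, mW, div_mul_div_comm, hsq]
    norm_num
  have iv : Integrable (vF B Ah Z) μ := by
    rw [show vF B Ah Z = -(B * (fun ω => Ah ω * Real.sin (Z ω))) from rfl]
    exact (i5.integrable_mul iB iAhsin).neg
  have mv : ∫ ω, vF B Ah Z ω ∂μ = 0 := by
    rw [show vF B Ah Z = -(B * (fun ω => Ah ω * Real.sin (Z ω))) from rfl]
    rw [integral_neg', i5.integral_mul_eq_mul_integral iB.aestronglyMeasurable iAhsin.aestronglyMeasurable, mAhsin, mul_zero, neg_zero]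
  -- second moment pieces
  have iAAh : Integrable (fun ω => A ω * Ah ω) μ := by
    rw [show (fun ω => A ω * Ah ω) = A * Ah from rfl]
    exact i2.integrable_mul iA iAh
  have iAAhcos : Integrable (fun ω => A ω * (Ah ω * Real.cos (Z ω))) μ := by
    refine iAAh.abs.mono'
      ((hA.mul (hAh.mul (Real.measurable_cos.comp hZ))).aestronglyMeasurable) ?_
    filter_upwards with ω
    rw [Real.norm_eq_abs, abs_mul, abs_mul]
    calc |A ω| * (|Ah ω| * |Real.cos (Z ω)|) ≤ |A ω| * (|Ah ω| * 1) := by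
          gcongr; exact Real.abs_cos_le_one _
      _ = |A ω * Ah ω| := by rw [mul_one, ← abs_mul]
  have mAAhcos : ∫ ω, A ω * (Ah ω * Real.cos (Z ω)) ∂μ = 0 := by
    rw [show (fun ω => A ω * (Ah ω * Real.cos (Z ω)))
        = A * (fun ω => Ah ω * Real.cos (Z ω)) from rfl]
    rw [i3.integral_mul_eq_mul_integral iA.aestronglyMeasurable iAhcos.aestronglyMeasurable, mAhcos, mul_zero]
  have iAhcos2 : Integrable (fun ω => (Ah ω * Real.cos (Z ω))^2) μ := by
    refine iAh2.mono'
      (((hAh.mul (Real.measurable_cos.comp hZ)).pow_const 2).aestronglyMeasurable) ?_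
    filter_upwards with ω
    rw [Real.norm_eq_abs, abs_of_nonneg (sq_nonneg _), mul_pow]
    calc (Ah ω)^2 * (Real.cos (Z ω))^2 ≤ (Ah ω)^2 * 1 :=
          mul_le_mul_of_nonneg_left (Real.cos_sq_le_one _) (sq_nonneg _)
      _ = (Ah ω)^2 := mul_one _
  have iAhsin2 : Integrable (fun ω => (Ah ω * Real.sin (Z ω))^2) μ := by
    refine iAh2.mono'
      (((hAh.mul (Real.measurable_sin.comp hZ)).pow_const 2).aestronglyMeasurable) ?_
    filter_upwards with ω
    rw [Real.norm_eq_abs, abs_of_nonneg (sq_nonneg _), mul_pow]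
    calc (Ah ω)^2 * (Real.sin (Z ω))^2 ≤ (Ah ω)^2 * 1 :=
          mul_le_mul_of_nonneg_left (Real.sin_sq_le_one _) (sq_nonneg _)
      _ = (Ah ω)^2 := mul_one _
  have icos2 : Integrable (fun ω => (Real.cos (Z ω))^2) μ := by
    refine (integrable_const (1:ℝ)).mono'
      (((Real.measurable_cos.comp hZ).pow_const 2).aestronglyMeasurable) ?_
    filter_upwards with ω
    rw [Real.norm_eq_abs, abs_of_nonneg (sq_nonneg _)]
    simpa using Real.cos_sq_le_one (Z ω)
  have isin2 : Integrable (fun ω => (Real.sin (Z ω))^2) μ := by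
    refine (integrable_const (1:ℝ)).mono'
      (((Real.measurable_sin.comp hZ).pow_const 2).aestronglyMeasurable) ?_
    filter_upwards with ω
    rw [Real.norm_eq_abs, abs_of_nonneg (sq_nonneg _)]
    simpa using Real.sin_sq_le_one (Z ω)
  have mAh2cos2 : ∫ ω, (Ah ω * Real.cos (Z ω))^2 ∂μ = ∫ ω, (Real.cos (Z ω))^2 ∂μ := by
    have e : (fun ω => (Ah ω * Real.cos (Z ω))^2)
        = (fun ω => (Ah ω)^2) * (fun ω => (Real.cos (Z ω))^2) := by
      funext ω; simp only [Pi.mul_apply]; ring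
    have hi : IndepFun (fun ω => (Ah ω)^2) (fun ω => (Real.cos (Z ω))^2) μ :=
      i1.comp (measurable_id.pow_const 2) (Real.measurable_cos.pow_const 2)
    rw [show (∫ ω, (Ah ω * Real.cos (Z ω))^2 ∂μ)
        = ∫ ω, ((fun ω => (Ah ω)^2) * fun ω => (Real.cos (Z ω))^2) ω ∂μ by rw [← e]]
    rw [hi.integral_mul_eq_mul_integral iAh2.aestronglyMeasurable icos2.aestronglyMeasurable, mAh2, one_mul]
  have mAh2sin2 : ∫ ω, (Ah ω * Real.sin (Z ω))^2 ∂μ = ∫ ω, (Real.sin (Z ω))^2 ∂μ := by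
    have e : (fun ω => (Ah ω * Real.sin (Z ω))^2)
        = (fun ω => (Ah ω)^2) * (fun ω => (Real.sin (Z ω))^2) := by
      funext ω; simp only [Pi.mul_apply]; ring
    have hi : IndepFun (fun ω => (Ah ω)^2) (fun ω => (Real.sin (Z ω))^2) μ :=
      i1.comp (measurable_id.pow_const 2) (Real.measurable_sin.pow_const 2)
    rw [show (∫ ω, (Ah ω * Real.sin (Z ω))^2 ∂μ)
        = ∫ ω, ((fun ω => (Ah ω)^2) * fun ω => (Real.sin (Z ω))^2) ω ∂μ by rw [← e]]
    rw [hi.integral_mul_eq_mul_integral iAh2.aestronglyMeasurable isin2.aestronglyMeasurable, mAh2, one_mul]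
  -- W²
  have eW2 : (fun ω => (A ω - Ah ω * Real.cos (Z ω))^2)
      = fun ω => (A ω)^2 - 2*(A ω * (Ah ω * Real.cos (Z ω))) + (Ah ω * Real.cos (Z ω))^2 := by
    funext ω; ring
  have i2ac : Integrable (fun ω => 2*(A ω * (Ah ω * Real.cos (Z ω)))) μ := iAAhcos.const_mul 2
  have isub : Integrable (fun ω => (A ω)^2 - 2*(A ω * (Ah ω * Real.cos (Z ω)))) μ :=
    iA2.sub i2ac
  have iW2 : Integrable (fun ω => (A ω - Ah ω * Real.cos (Z ω))^2) μ := by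
    rw [eW2]
    exact isub.add iAhcos2
  have mW2 : ∫ ω, (A ω - Ah ω * Real.cos (Z ω))^2 ∂μ = 1 + ∫ ω, (Real.cos (Z ω))^2 ∂μ := by
    rw [eW2, integral_add isub iAhcos2, integral_sub iA2 i2ac, integral_const_mul, mA2,
      mAAhcos, mAh2cos2]
    ring
  -- u², v²
  have eu2 : (fun ω => (uF B A Ah Z ω)^2)
      = (fun ω => (B ω)^2) * (fun ω => (A ω - Ah ω * Real.cos (Z ω))^2) := by
    funext ω; simp only [Pi.mul_apply, uF]; ring
  have iu2 : Integrable (fun ω => (uF B A Ah Z ω)^2) μ := by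
    rw [eu2]; exact i6.integrable_mul iB2 iW2
  have mu2 : ∫ ω, (uF B A Ah Z ω)^2 ∂μ = 1 + ∫ ω, (Real.cos (Z ω))^2 ∂μ := by
    rw [show (∫ ω, (uF B A Ah Z ω)^2 ∂μ)
        = ∫ ω, ((fun ω => (B ω)^2) * fun ω => (A ω - Ah ω * Real.cos (Z ω))^2) ω ∂μ by
        rw [← eu2]]
    rw [i6.integral_mul_eq_mul_integral iB2.aestronglyMeasurable iW2.aestronglyMeasurable, mB2, one_mul, mW2]
  have ev2 : (fun ω => (vF B Ah Z ω)^2)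
      = (fun ω => (B ω)^2) * (fun ω => (Ah ω * Real.sin (Z ω))^2) := by
    funext ω; simp only [Pi.mul_apply, vF]; ring
  have iv2 : Integrable (fun ω => (vF B Ah Z ω)^2) μ := by
    rw [ev2]; exact i7.integrable_mul iB2 iAhsin2
  have mv2 : ∫ ω, (vF B Ah Z ω)^2 ∂μ = ∫ ω, (Real.sin (Z ω))^2 ∂μ := by
    rw [show (∫ ω, (vF B Ah Z ω)^2 ∂μ)
        = ∫ ω, ((fun ω => (B ω)^2) * fun ω => (Ah ω * Real.sin (Z ω))^2) ω ∂μ by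
        rw [← ev2]]
    rw [i7.integral_mul_eq_mul_integral iB2.aestronglyMeasurable iAhsin2.aestronglyMeasurable, mB2, one_mul, mAh2sin2]
  have ccss : (∫ ω, (Real.cos (Z ω))^2 ∂μ) + (∫ ω, (Real.sin (Z ω))^2 ∂μ) = 1 := by
    rw [← integral_add icos2 isin2]
    have e : (fun ω => (Real.cos (Z ω))^2 + (Real.sin (Z ω))^2) = fun _ => (1:ℝ) := by
      funext ω; exact Real.cos_sq_add_sin_sq (Z ω)
    rw [show (∫ ω, ((Real.cos (Z ω))^2 + (Real.sin (Z ω))^2) ∂μ) = ∫ _ω, (1:ℝ) ∂μ by rw [← e]]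
    simp
  -- MemLp
  have humeas : AEStronglyMeasurable (uF B A Ah Z) μ :=
    (hB.mul (hA.sub (hAh.mul (Real.measurable_cos.comp hZ)))).aestronglyMeasurable
  have hvmeas : AEStronglyMeasurable (vF B Ah Z) μ :=
    ((hB.mul (hAh.mul (Real.measurable_sin.comp hZ))).neg).aestronglyMeasurable
  have memu : MemLp (uF B A Ah Z) 2 μ := by
    rw [memLp_two_iff_integrable_sq humeas]
    exact iu2
  have memv : MemLp (vF B Ah Z) 2 μ := by
    rw [memLp_two_iff_integrable_sq hvmeas]
    exact iv2
  refine ⟨iu, iv, memu, memv, mu, mv, ?_⟩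
  rw [variance_eq_sub memu, variance_eq_sub memv]
  have h1 : μ[(uF B A Ah Z)^2] = 1 + ∫ ω, (Real.cos (Z ω))^2 ∂μ := mu2
  have h2 : μ[(vF B Ah Z)^2] = ∫ ω, (Real.sin (Z ω))^2 ∂μ := mv2
  rw [h1, h2]
  have h3 : μ[uF B A Ah Z] = π/4 := mu
  have h4 : μ[vF B Ah Z] = 0 := mv
  rw [h3, h4]
  have := ccss
  nlinarith [this]

end OmegaSide


/-- Lemma 1: for mutually independent Rayleigh magnitudes a_l, â_l, b_l and triangular
phase differences Z_l, the complex random variable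
R = Σ_{l} b_l (a_l - â_l e^{i Z_l}) has mean Lπ/4 and variance
E[|R - E R|²] = L(32 - π²)/16. -/
theorem lemma1_mean_variance_of_R
    {Ω : Type*} [MeasureSpace Ω] [IsProbabilityMeasure (ℙ : Measure Ω)]
    (L : ℕ) (hL : 0 < L)
    (a ahat b Z : Fin L → Ω → ℝ)
    (ha : ∀ l, Measurable (a l)) (hahat : ∀ l, Measurable (ahat l))
    (hb : ∀ l, Measurable (b l)) (hZ : ∀ l, Measurable (Z l))
    (h_indep : iIndepFun
      (fun p : Fin L × Fin 4 => ![a p.1, ahat p.1, b p.1, Z p.1] p.2) ℙ)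
    (halaw : ∀ l, Measure.map (a l) ℙ
      = volume.withDensity (fun r => ENNReal.ofReal (rayleighPdf r)))
    (hahatlaw : ∀ l, Measure.map (ahat l) ℙ
      = volume.withDensity (fun r => ENNReal.ofReal (rayleighPdf r)))
    (hblaw : ∀ l, Measure.map (b l) ℙ
      = volume.withDensity (fun r => ENNReal.ofReal (rayleighPdf r)))
    (hZlaw : ∀ l, Measure.map (Z l) ℙ
      = volume.withDensity (fun z => ENNReal.ofReal (triangularPdf z)))
    (R : Ω → ℂ)
    (hR : R = fun ω => ∑ l : Fin L,
      (b l ω : ℂ) * ((a l ω : ℂ) - (ahat l ω : ℂ) * Complex.exp (Complex.I * (Z l ω : ℂ)))) :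
    (∫ ω, R ω ∂ℙ) = ((L * π / 4 : ℝ) : ℂ) ∧
    (∫ ω, ‖R ω - ∫ ω', R ω' ∂ℙ‖ ^ 2 ∂ℙ) = L * (32 - π^2) / 16 := by
  classical
  have hFmeas : ∀ p : Fin L × Fin 4,
      Measurable ((fun p : Fin L × Fin 4 => ![a p.1, ahat p.1, b p.1, Z p.1] p.2) p) := by
    rintro ⟨l, j⟩
    fin_cases j
    exacts [ha l, hahat l, hb l, hZ l]
  -- independence instances
  have i1 : ∀ l, IndepFun (ahat l) (Z l) ℙ := by
    intro l
    exact h_indep.indepFun (i := (l,1)) (j := (l,3)) (by simp)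
  have i2 : ∀ l, IndepFun (a l) (ahat l) ℙ := by
    intro l
    exact h_indep.indepFun (i := (l,0)) (j := (l,1)) (by simp)
  have i3 : ∀ l, IndepFun (a l) (fun ω => ahat l ω * Real.cos (Z l ω)) ℙ := by
    intro l
    exact indep_comp_of_disjoint h_indep hFmeas {(l,0)} {(l,1),(l,3)} (by simp)
      (φ := fun g => g ⟨(l,0), by simp⟩)
      (ψ := fun g => g ⟨(l,1), by simp⟩ * Real.cos (g ⟨(l,3), by simp⟩))
      (by fun_prop)
      (by fun_prop)
  have i4 : ∀ l, IndepFun (b l) (fun ω => a l ω - ahat l ω * Real.cos (Z l ω)) ℙ := by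
    intro l
    exact indep_comp_of_disjoint h_indep hFmeas {(l,2)} {(l,0),(l,1),(l,3)} (by simp)
      (φ := fun g => g ⟨(l,2), by simp⟩)
      (ψ := fun g => g ⟨(l,0), by simp⟩
        - g ⟨(l,1), by simp⟩ * Real.cos (g ⟨(l,3), by simp⟩))
      (by fun_prop)
      (by fun_prop)
  have i5 : ∀ l, IndepFun (b l) (fun ω => ahat l ω * Real.sin (Z l ω)) ℙ := by
    intro l
    exact indep_comp_of_disjoint h_indep hFmeas {(l,2)} {(l,1),(l,3)} (by simp)
      (φ := fun g => g ⟨(l,2), by simp⟩)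
      (ψ := fun g => g ⟨(l,1), by simp⟩ * Real.sin (g ⟨(l,3), by simp⟩))
      (by fun_prop)
      (by fun_prop)
  have i6 : ∀ l, IndepFun (fun ω => (b l ω)^2)
      (fun ω => (a l ω - ahat l ω * Real.cos (Z l ω))^2) ℙ := by
    intro l
    exact indep_comp_of_disjoint h_indep hFmeas {(l,2)} {(l,0),(l,1),(l,3)} (by simp)
      (φ := fun g => (g ⟨(l,2), by simp⟩)^2)
      (ψ := fun g => (g ⟨(l,0), by simp⟩
        - g ⟨(l,1), by simp⟩ * Real.cos (g ⟨(l,3), by simp⟩))^2)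
      (by fun_prop)
      (by fun_prop)
  have i7 : ∀ l, IndepFun (fun ω => (b l ω)^2)
      (fun ω => (ahat l ω * Real.sin (Z l ω))^2) ℙ := by
    intro l
    exact indep_comp_of_disjoint h_indep hFmeas {(l,2)} {(l,1),(l,3)} (by simp)
      (φ := fun g => (g ⟨(l,2), by simp⟩)^2)
      (ψ := fun g => (g ⟨(l,1), by simp⟩ * Real.sin (g ⟨(l,3), by simp⟩))^2)
      (by fun_prop)
      (by fun_prop)
  have Hl := fun l => perCoord (ha l) (hahat l) (hb l) (hZ l)
    (halaw l) (hahatlaw l) (hblaw l) (hZlaw l)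
    (i1 l) (i2 l) (i3 l) (i4 l) (i5 l) (i6 l) (i7 l)
  have hIu : ∀ l, Integrable (uF (b l) (a l) (ahat l) (Z l)) ℙ := fun l => (Hl l).1
  have hIv : ∀ l, Integrable (vF (b l) (ahat l) (Z l)) ℙ := fun l => (Hl l).2.1
  have hMu : ∀ l, MemLp (uF (b l) (a l) (ahat l) (Z l)) 2 ℙ := fun l => (Hl l).2.2.1
  have hMv : ∀ l, MemLp (vF (b l) (ahat l) (Z l)) 2 ℙ := fun l => (Hl l).2.2.2.1
  have hEu : ∀ l, ∫ ω, uF (b l) (a l) (ahat l) (Z l) ω ∂ℙ = π/4 := fun l => (Hl l).2.2.2.2.1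
  have hEv : ∀ l, ∫ ω, vF (b l) (ahat l) (Z l) ω ∂ℙ = 0 := fun l => (Hl l).2.2.2.2.2.1
  have hVar : ∀ l, variance (uF (b l) (a l) (ahat l) (Z l)) ℙ
      + variance (vF (b l) (ahat l) (Z l)) ℙ = 2 - π^2/16 := fun l => (Hl l).2.2.2.2.2.2
  -- cross-l independence
  have hd4 : ∀ l m : Fin L, l ≠ m →
      Disjoint ({(l,0),(l,1),(l,2),(l,3)} : Finset (Fin L × Fin 4)) {(m,0),(m,1),(m,2),(m,3)} := by
    intro l m hlm
    simp only [Finset.disjoint_left, Finset.mem_insert, Finset.mem_singleton]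
    rintro p (rfl|rfl|rfl|rfl) <;> simp [Prod.ext_iff, hlm]
  have iuu : ∀ l m : Fin L, l ≠ m →
      IndepFun (uF (b l) (a l) (ahat l) (Z l)) (uF (b m) (a m) (ahat m) (Z m)) ℙ := by
    intro l m hlm
    exact indep_comp_of_disjoint h_indep hFmeas _ _ (hd4 l m hlm)
      (φ := fun g => g ⟨(l,2), by simp⟩ * (g ⟨(l,0), by simp⟩
        - g ⟨(l,1), by simp⟩ * Real.cos (g ⟨(l,3), by simp⟩)))
      (ψ := fun g => g ⟨(m,2), by simp⟩ * (g ⟨(m,0), by simp⟩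
        - g ⟨(m,1), by simp⟩ * Real.cos (g ⟨(m,3), by simp⟩)))
      (by fun_prop)
      (by fun_prop)
  have ivv : ∀ l m : Fin L, l ≠ m →
      IndepFun (vF (b l) (ahat l) (Z l)) (vF (b m) (ahat m) (Z m)) ℙ := by
    intro l m hlm
    exact indep_comp_of_disjoint h_indep hFmeas _ _ (hd4 l m hlm)
      (φ := fun g => -(g ⟨(l,2), by simp⟩
        * (g ⟨(l,1), by simp⟩ * Real.sin (g ⟨(l,3), by simp⟩))))
      (ψ := fun g => -(g ⟨(m,2), by simp⟩
        * (g ⟨(m,1), by simp⟩ * Real.sin (g ⟨(m,3), by simp⟩))))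
      (by fun_prop)
      (by fun_prop)
  -- sums
  set U : Ω → ℝ := ∑ l : Fin L, uF (b l) (a l) (ahat l) (Z l) with hU
  set V : Ω → ℝ := ∑ l : Fin L, vF (b l) (ahat l) (Z l) with hV
  have hUapp : ∀ ω, U ω = ∑ l : Fin L, uF (b l) (a l) (ahat l) (Z l) ω := by
    intro ω; rw [hU]; simp [Finset.sum_apply]
  have hVapp : ∀ ω, V ω = ∑ l : Fin L, vF (b l) (ahat l) (Z l) ω := by
    intro ω; rw [hV]; simp [Finset.sum_apply]
  have iU : Integrable U ℙ := integrable_finset_sum' _ (fun l _ => hIu l)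
  have iV : Integrable V ℙ := integrable_finset_sum' _ (fun l _ => hIv l)
  have hEU : ∫ ω, U ω ∂ℙ = L * (π/4) := by
    have : ∫ ω, U ω ∂ℙ = ∑ l : Fin L, ∫ ω, uF (b l) (a l) (ahat l) (Z l) ω ∂ℙ := by
      rw [show (fun ω => U ω) = fun ω => ∑ l : Fin L, uF (b l) (a l) (ahat l) (Z l) ω from
        funext hUapp]
      exact integral_finset_sum _ (fun l _ => hIu l)
    rw [this]
    simp [hEu, Finset.sum_const, nsmul_eq_mul]
  have hEV : ∫ ω, V ω ∂ℙ = 0 := by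
    have : ∫ ω, V ω ∂ℙ = ∑ l : Fin L, ∫ ω, vF (b l) (ahat l) (Z l) ω ∂ℙ := by
      rw [show (fun ω => V ω) = fun ω => ∑ l : Fin L, vF (b l) (ahat l) (Z l) ω from
        funext hVapp]
      exact integral_finset_sum _ (fun l _ => hIv l)
    rw [this]
    simp [hEv]
  -- rewrite R
  have hRuv : R = fun ω => ((U ω : ℝ) : ℂ) + ((V ω : ℝ) : ℂ) * Complex.I := by
    funext ω
    rw [hR]
    have key : ∀ (y x z w : ℝ), (y:ℂ) * ((x:ℂ) - (z:ℂ) * Complex.exp (Complex.I * (w:ℂ)))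
        = ((y*(x - z*Real.cos w) : ℝ) : ℂ) + ((-(y*(z*Real.sin w)) : ℝ) : ℂ) * Complex.I := by
      intro y x z w
      rw [mul_comm Complex.I (w:ℂ), Complex.exp_mul_I]
      push_cast
      ring
    calc ∑ l : Fin L, (b l ω : ℂ) * ((a l ω : ℂ)
          - (ahat l ω : ℂ) * Complex.exp (Complex.I * (Z l ω : ℂ)))
        = ∑ l : Fin L, (((uF (b l) (a l) (ahat l) (Z l) ω : ℝ) : ℂ)
          + ((vF (b l) (ahat l) (Z l) ω : ℝ) : ℂ) * Complex.I) :=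
          Finset.sum_congr rfl fun l _ => key (b l ω) (a l ω) (ahat l ω) (Z l ω)
      _ = ((U ω : ℝ) : ℂ) + ((V ω : ℝ) : ℂ) * Complex.I := by
          rw [Finset.sum_add_distrib, ← Finset.sum_mul, hUapp, hVapp]
          push_cast
          ring
  -- the mean
  have iUc : Integrable (fun ω => ((U ω : ℝ) : ℂ)) ℙ := iU.ofReal
  have iVc : Integrable (fun ω => ((V ω : ℝ) : ℂ) * Complex.I) ℙ := iV.ofReal.mul_const _
  have hmean : (∫ ω, R ω ∂ℙ) = ((L * π / 4 : ℝ) : ℂ) := by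
    rw [hRuv, integral_add iUc iVc]
    have e1 : (fun ω => ((U ω : ℝ) : ℂ)) = fun ω => (U ω) • (1:ℂ) := by
      funext ω; rw [Complex.real_smul, mul_one]
    have e : (fun ω => ((V ω : ℝ) : ℂ) * Complex.I) = fun ω => (V ω) • (Complex.I) := by
      funext ω; rw [Complex.real_smul]
    rw [e1, e, integral_smul_const, integral_smul_const, hEU, hEV]
    push_cast
    simp [Complex.real_smul]
    ring
  refine ⟨hmean, ?_⟩
  -- variance
  have key2 : ∀ ω, ‖R ω - ∫ ω', R ω' ∂ℙ‖^2
      = (U ω - L*(π/4))^2 + (V ω)^2 := by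
    intro ω
    rw [hmean]
    have hRω : R ω = ((U ω : ℝ) : ℂ) + ((V ω : ℝ) : ℂ) * Complex.I := by rw [hRuv]
    rw [hRω]
    have e : ((U ω : ℝ) : ℂ) + ((V ω : ℝ) : ℂ) * Complex.I - ((L * π / 4 : ℝ) : ℂ)
        = (((U ω - L*(π/4) : ℝ)) : ℂ) + (((V ω : ℝ)) : ℂ) * Complex.I := by
      push_cast; ring
    rw [e, Complex.sq_norm, Complex.normSq_add_mul_I]
  have MemU : MemLp U 2 ℙ := memLp_finset_sum' _ (fun l _ => hMu l)
  have MemV : MemLp V 2 ℙ := memLp_finset_sum' _ (fun l _ => hMv l)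
  have MemUm : MemLp (fun ω => U ω - L*(π/4)) 2 ℙ := MemU.sub (memLp_const _)
  have iUm2 : Integrable (fun ω => (U ω - L*(π/4))^2) ℙ := MemUm.integrable_sq
  have iV2 : Integrable (fun ω => (V ω)^2) ℙ := MemV.integrable_sq
  have step1 : (∫ ω, ‖R ω - ∫ ω', R ω' ∂ℙ‖^2 ∂ℙ)
      = (∫ ω, (U ω - L*(π/4))^2 ∂ℙ) + ∫ ω, (V ω)^2 ∂ℙ := by
    rw [integral_congr_ae (Filter.Eventually.of_forall key2)]
    exact integral_add iUm2 iV2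
  have hvarU : (∫ ω, (U ω - L*(π/4))^2 ∂ℙ) = variance U ℙ := by
    rw [variance_eq_integral MemU.aestronglyMeasurable.aemeasurable, hEU]
  have hvarV : (∫ ω, (V ω)^2 ∂ℙ) = variance V ℙ := by
    rw [variance_eq_integral MemV.aestronglyMeasurable.aemeasurable, hEV]
    congr 1
    funext ω
    simp
  have hsumU : variance U ℙ = ∑ l : Fin L, variance (uF (b l) (a l) (ahat l) (Z l)) ℙ := by
    rw [hU]
    exact IndepFun.variance_sum (fun l _ => hMu l)
      (fun l _ m _ hlm => iuu l m hlm)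
  have hsumV : variance V ℙ = ∑ l : Fin L, variance (vF (b l) (ahat l) (Z l)) ℙ := by
    rw [hV]
    exact IndepFun.variance_sum (fun l _ => hMv l)
      (fun l _ m _ hlm => ivv l m hlm)
  rw [step1, hvarU, hvarV, hsumU, hsumV, ← Finset.sum_add_distrib]
  rw [Finset.sum_congr rfl (fun l _ => hVar l), Finset.sum_const]
  simp only [Finset.card_univ, Fintype.card_fin, nsmul_eq_mul]
  ring
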